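/- Source–channel converse for the additive mod-q MAC (finite-blocklength Fano form): let q ≥ 1, n ≥ 1, let U₁ = (U_{1,1},…,U_{1,n}) and U₂ = (U_{2,1},…,U_{2,n}) be source sequences with values in finite sets 𝒰₁^n and 𝒰₂^n, and let V = (V_1,…,V_n) with V_i ∈ ℤ/qℤ be noise, all on a common probability space with V^n independent of (U₁^n, U₂^n). Suppose the channel inputs are X_{l,i} = g_{l,i}(U_l^n, Y^{i−1}) ∈ ℤ/qℤ for deterministic encoding functions g_{l,i} (l = 1,2), the output is Y_i = X_{1,i} + X_{2,i} + V_i (addition mod q), the decoder outputs (Û₁^n, Û₂^n) = ψ(Y^n) for a deterministic function ψ, and the error probability is P_e = Pr((Û₁^n, Û₂^n) ≠ (U₁^n, U₂^n)). Then H(U₁^n, U₂^n) ≤ n·log q − H(V^n) + log 2 + P_e · log(|𝒰₁|^n |𝒰₂|^n). -/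
import Mathlib


open Finset

set_option synthInstance.maxSize 1000

/-- Probability mass of the event `X = a` under the weight function `μ` on the finite
sample space `Ω`. -/
noncomputable def pmass {Ω α : Type*} [Fintype Ω] [DecidableEq α]
    (μ : Ω → ℝ) (X : Ω → α) (a : α) : ℝ := ∑ ω, if X ω = a then μ ω else 0

/-- Shannon entropy (natural logarithm) of the discrete random variable `X` defined on the
finite probability space `(Ω, μ)`. -/
noncomputable def entropy {Ω α : Type*} [Fintype Ω] [Fintype α] [DecidableEq α]
    (μ : Ω → ℝ) (X : Ω → α) : ℝ := ∑ a, Real.negMulLog (pmass μ X a)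

/-- Gibbs' inequality on finite vectors. -/
lemma my_gibbs {α : Type*} [Fintype α] (p q : α → ℝ)
    (hp : ∀ a, 0 ≤ p a) (hq : ∀ a, 0 ≤ q a) (hp1 : ∑ a, p a = 1)
    (hq1 : ∑ a, q a ≤ 1) (hsupp : ∀ a, p a ≠ 0 → q a ≠ 0) :
    ∑ a, Real.negMulLog (p a) ≤ ∑ a, -(p a * Real.log (q a)) := by
  have key : ∀ a, Real.negMulLog (p a) + p a * Real.log (q a) ≤ q a - p a := by
    intro a
    rcases eq_or_lt_of_le (hp a) with h0 | h0
    · simp [← h0, hq a]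
    · have hq0 : 0 < q a := lt_of_le_of_ne (hq a) (Ne.symm (hsupp a (ne_of_gt h0)))
      have hlog := Real.log_le_sub_one_of_pos (div_pos hq0 h0)
      rw [Real.log_div (ne_of_gt hq0) (ne_of_gt h0)] at hlog
      have h2 : p a * (Real.log (q a) - Real.log (p a)) ≤ p a * (q a / p a - 1) :=
        mul_le_mul_of_nonneg_left hlog h0.le
      have h3 : p a * (q a / p a - 1) = q a - p a := by field_simp
      rw [Real.negMulLog]
      nlinarith
  have hsum := Finset.sum_le_sum (fun a (_ : a ∈ Finset.univ) => key a)
  rw [Finset.sum_add_distrib, Finset.sum_sub_distrib, hp1] at hsum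
  have h4 : ∑ a, -(p a * Real.log (q a)) = -∑ a, p a * Real.log (q a) := by
    rw [Finset.sum_neg_distrib]
  linarith

/-- Maximum entropy bound. -/
lemma my_maxent {α : Type*} [Fintype α] (p : α → ℝ)
    (hp : ∀ a, 0 ≤ p a) (hp1 : ∑ a, p a = 1) :
    ∑ a, Real.negMulLog (p a) ≤ Real.log (Fintype.card α) := by
  have hcard : 0 < Fintype.card α := by
    rcases Nat.eq_zero_or_pos (Fintype.card α) with h | h
    · have : IsEmpty α := Fintype.card_eq_zero_iff.mp h
      rw [Finset.univ_eq_empty, Finset.sum_empty] at hp1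
      norm_num at hp1
    · exact h
  have hcR : (0:ℝ) < (Fintype.card α : ℝ) := by exact_mod_cast hcard
  have := my_gibbs p (fun _ => (Fintype.card α : ℝ)⁻¹) hp
    (fun a => by positivity) hp1
    (by rw [Finset.sum_const, Finset.card_univ, nsmul_eq_mul]
        rw [mul_inv_cancel₀ (ne_of_gt hcR)])
    (fun a _ => by positivity)
  refine this.trans (le_of_eq ?_)
  have hterm : ∀ a ∈ Finset.univ, -(p a * Real.log ((fun _ : α => ((Fintype.card α : ℝ))⁻¹) a))
      = p a * Real.log (Fintype.card α) := by
    intro a _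
    rw [Real.log_inv]; ring
  rw [Finset.sum_congr rfl hterm, ← Finset.sum_mul, hp1, one_mul]

/-- Grouping bound: total entropy of subprobability vector. -/
lemma my_grouping {α : Type*} [Fintype α] (p : α → ℝ) (hp : ∀ a, 0 ≤ p a) :
    ∑ a, Real.negMulLog (p a) ≤
      Real.negMulLog (∑ a, p a) + (∑ a, p a) * Real.log (Fintype.card α) := by
  set s := ∑ a, p a with hs
  rcases eq_or_lt_of_le (Finset.sum_nonneg fun a _ => hp a) with h0 | h0
  · have hz : ∀ a ∈ Finset.univ, p a = 0 :=
      (Finset.sum_eq_zero_iff_of_nonneg (fun a _ => hp a)).mp h0.symm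
    have : ∀ a ∈ Finset.univ, Real.negMulLog (p a) = 0 := fun a ha => by
      rw [hz a ha, Real.negMulLog_zero]
    have hsz : s = 0 := by rw [hs, ← h0]
    rw [Finset.sum_congr rfl this, Finset.sum_const, smul_zero, hsz]
    simp
  · rw [← hs] at h0
    have hps : ∀ a, 0 ≤ p a / s := fun a => div_nonneg (hp a) h0.le
    have hps1 : ∑ a, p a / s = 1 := by
      rw [← Finset.sum_div, ← hs, div_self (ne_of_gt h0)]
    have hm := my_maxent (fun a => p a / s) hps hps1
    have expand : ∀ a, Real.negMulLog (p a)
        = (p a / s) * Real.negMulLog s + s * Real.negMulLog (p a / s) := by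
      intro a
      rw [← Real.negMulLog_mul]
      congr 1
      field_simp
    rw [Finset.sum_congr rfl fun a _ => expand a, Finset.sum_add_distrib,
      ← Finset.sum_mul, hps1, one_mul, ← Finset.mul_sum]
    nlinarith [mul_le_mul_of_nonneg_left hm h0.le]

section PmassLemmas

variable {Ω α β : Type*} [Fintype Ω]

lemma pmass_nonneg [DecidableEq α] (μ : Ω → ℝ) (hμ0 : ∀ ω, 0 ≤ μ ω)
    (X : Ω → α) (a : α) : 0 ≤ pmass μ X a :=
  Finset.sum_nonneg fun ω _ => by by_cases h : X ω = a <;> simp [h, hμ0 ω]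

lemma sum_pmass [Fintype α] [DecidableEq α] (μ : Ω → ℝ) (X : Ω → α)
    (hμ1 : ∑ ω, μ ω = 1) : ∑ a, pmass μ X a = 1 := by
  unfold pmass
  rw [Finset.sum_comm]
  simp [Finset.sum_ite_eq, hμ1]

lemma pmass_fst [DecidableEq α] [Fintype β] [DecidableEq β] (μ : Ω → ℝ)
    (A : Ω → α) (B : Ω → β) (a : α) :
    pmass μ A a = ∑ b, pmass μ (fun ω => (A ω, B ω)) (a, b) := by
  unfold pmass
  rw [Finset.sum_comm]
  refine Finset.sum_congr rfl fun ω _ => ?_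
  by_cases h : A ω = a <;> simp [Prod.ext_iff, h, Finset.sum_ite_eq]

lemma pmass_snd [Fintype α] [DecidableEq α] [DecidableEq β] (μ : Ω → ℝ)
    (A : Ω → α) (B : Ω → β) (b : β) :
    pmass μ B b = ∑ a, pmass μ (fun ω => (A ω, B ω)) (a, b) := by
  unfold pmass
  rw [Finset.sum_comm]
  refine Finset.sum_congr rfl fun ω _ => ?_
  by_cases h : B ω = b <;> simp [Prod.ext_iff, h, Finset.sum_ite_eq]

lemma entropy_comp_inj [Fintype α] [DecidableEq α] [Fintype β] [DecidableEq β]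
    (μ : Ω → ℝ) (X : Ω → α) (f : α → β) (hf : Function.Injective f) :
    entropy μ (fun ω => f (X ω)) = entropy μ X := by
  unfold entropy
  have h1 : ∀ b ∈ Finset.univ, b ∉ Finset.univ.image f →
      Real.negMulLog (pmass μ (fun ω => f (X ω)) b) = 0 := by
    intro b _ hb
    have hz : pmass μ (fun ω => f (X ω)) b = 0 := by
      apply Finset.sum_eq_zero
      intro ω _
      rw [if_neg]
      intro h
      exact hb (h ▸ Finset.mem_image_of_mem f (Finset.mem_univ (X ω)))
    rw [hz, Real.negMulLog_zero]
  rw [← Finset.sum_subset (Finset.subset_univ (Finset.univ.image f)) h1,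
    Finset.sum_image (fun a _ a' _ h => hf h)]
  refine Finset.sum_congr rfl fun a _ => ?_
  congr 1
  unfold pmass
  refine Finset.sum_congr rfl fun ω _ => ?_
  simp [hf.eq_iff]

lemma entropy_pair_of_indep [Fintype α] [DecidableEq α] [Fintype β] [DecidableEq β]
    (μ : Ω → ℝ) (hμ1 : ∑ ω, μ ω = 1) (A : Ω → α) (B : Ω → β)
    (h : ∀ a b, pmass μ (fun ω => (A ω, B ω)) (a, b) = pmass μ A a * pmass μ B b) :
    entropy μ (fun ω => (A ω, B ω)) = entropy μ A + entropy μ B := by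
  unfold entropy
  rw [Fintype.sum_prod_type]
  have hA := sum_pmass μ A hμ1
  have hB := sum_pmass μ B hμ1
  have step : ∀ a ∈ Finset.univ,
      ∑ b, Real.negMulLog (pmass μ (fun ω => (A ω, B ω)) (a, b))
      = Real.negMulLog (pmass μ A a)
        + pmass μ A a * ∑ b, Real.negMulLog (pmass μ B b) := by
    intro a _
    have : ∀ b ∈ Finset.univ, Real.negMulLog (pmass μ (fun ω => (A ω, B ω)) (a, b))
        = pmass μ B b * Real.negMulLog (pmass μ A a)
          + pmass μ A a * Real.negMulLog (pmass μ B b) := by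
      intro b _
      rw [h a b, Real.negMulLog_mul]
    rw [Finset.sum_congr rfl this, Finset.sum_add_distrib, ← Finset.sum_mul, hB,
      one_mul, ← Finset.mul_sum]
  rw [Finset.sum_congr rfl step, Finset.sum_add_distrib, ← Finset.sum_mul, hA, one_mul]

lemma entropy_pair_le [Fintype α] [DecidableEq α] [Fintype β] [DecidableEq β]
    (μ : Ω → ℝ) (hμ0 : ∀ ω, 0 ≤ μ ω) (hμ1 : ∑ ω, μ ω = 1) (A : Ω → α) (B : Ω → β) :
    entropy μ (fun ω => (A ω, B ω)) ≤ entropy μ A + entropy μ B := by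
  set p := pmass μ (fun ω => (A ω, B ω)) with hpdef
  have hp : ∀ c, 0 ≤ p c := fun c => pmass_nonneg μ hμ0 _ c
  have hp1 : ∑ c, p c = 1 := sum_pmass μ _ hμ1
  have hAle : ∀ a b, p (a, b) ≤ pmass μ A a := by
    intro a b
    rw [pmass_fst μ A B a]
    exact Finset.single_le_sum (fun b' _ => hp (a, b')) (Finset.mem_univ b)
  have hBle : ∀ a b, p (a, b) ≤ pmass μ B b := by
    intro a b
    rw [pmass_snd μ A B b]
    exact Finset.single_le_sum (fun a' _ => hp (a', b)) (Finset.mem_univ a)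
  have hA0 : ∀ a b, p (a, b) ≠ 0 → pmass μ A a ≠ 0 := fun a b h =>
    ne_of_gt (lt_of_lt_of_le (lt_of_le_of_ne (hp (a, b)) (Ne.symm h)) (hAle a b))
  have hB0 : ∀ a b, p (a, b) ≠ 0 → pmass μ B b ≠ 0 := fun a b h =>
    ne_of_gt (lt_of_lt_of_le (lt_of_le_of_ne (hp (a, b)) (Ne.symm h)) (hBle a b))
  have hgibbs := my_gibbs p (fun c => pmass μ A c.1 * pmass μ B c.2) hp
    (fun c => mul_nonneg (pmass_nonneg μ hμ0 A c.1) (pmass_nonneg μ hμ0 B c.2))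
    hp1
    (by rw [Fintype.sum_prod_type]
        simp only [← Finset.mul_sum]
        rw [← Finset.sum_mul, sum_pmass μ A hμ1, sum_pmass μ B hμ1, one_mul])
    (fun c hc => mul_ne_zero (hA0 c.1 c.2 hc) (hB0 c.1 c.2 hc))
  have : entropy μ (fun ω => (A ω, B ω)) = ∑ c, Real.negMulLog (p c) := by
    unfold entropy; rfl
  rw [this]
  refine hgibbs.trans (le_of_eq ?_)
  have hterm : ∀ (c : α × β), c ∈ Finset.univ →
      -(p c * Real.log (pmass μ A c.1 * pmass μ B c.2))
      = -(p c * Real.log (pmass μ A c.1)) + -(p c * Real.log (pmass μ B c.2)) := by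
    rintro ⟨a, b⟩ _
    by_cases h0 : p (a, b) = 0
    · simp [h0]
    · rw [Real.log_mul (hA0 a b h0) (hB0 a b h0)]; ring
  rw [Finset.sum_congr rfl hterm, Finset.sum_add_distrib]
  have hmargA : ∀ a, ∑ b, p (a, b) = pmass μ A a := by
    intro a
    rw [hpdef]
    exact (pmass_fst μ A B a).symm
  have hmargB : ∀ b, ∑ a, p (a, b) = pmass μ B b := by
    intro b
    rw [hpdef]
    exact (pmass_snd μ A B b).symm
  have hHA : ∑ c : α × β, -(p c * Real.log (pmass μ A c.1)) = entropy μ A := by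
    rw [Fintype.sum_prod_type]
    unfold entropy
    refine Finset.sum_congr rfl fun a _ => ?_
    have : ∑ b, -(p (a, b) * Real.log (pmass μ A a))
        = (∑ b, p (a, b)) * (-Real.log (pmass μ A a)) := by
      rw [Finset.sum_mul]
      exact Finset.sum_congr rfl fun b _ => by ring
    rw [this, hmargA a, Real.negMulLog]
    ring
  have hHB : ∑ c : α × β, -(p c * Real.log (pmass μ B c.2)) = entropy μ B := by
    rw [Fintype.sum_prod_type, Finset.sum_comm]
    unfold entropy
    refine Finset.sum_congr rfl fun b _ => ?_
    have : ∑ a, -(p (a, b) * Real.log (pmass μ B b))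
        = (∑ a, p (a, b)) * (-Real.log (pmass μ B b)) := by
      rw [Finset.sum_mul]
      exact Finset.sum_congr rfl fun a _ => by ring
    rw [this, hmargB b, Real.negMulLog]
    ring
  rw [hHA, hHB]

end PmassLemmas

/-- Source–channel converse (finite-blocklength Fano form) for the additive mod-`q` MAC:
with sources `(U₁^n, U₂^n)`, noise `V^n` independent of the sources, encoders
`X_{l,i} = g_{l,i}(U_l^n, Y^{i-1})`, channel `Y_i = X_{1,i} + X_{2,i} + V_i` (mod `q`),
decoder `(Û₁^n, Û₂^n) = ψ(Y^n)` and error probability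
`P_e = Pr((Û₁^n, Û₂^n) ≠ (U₁^n, U₂^n))`, one has
`H(U₁^n, U₂^n) ≤ n log q − H(V^n) + log 2 + P_e log(|𝒰₁|^n |𝒰₂|^n)`. -/
theorem additiveMAC_source_channel_converse
    {Ω 𝒰₁ 𝒰₂ : Type*} [Fintype Ω]
    [Fintype 𝒰₁] [DecidableEq 𝒰₁] [Nonempty 𝒰₁]
    [Fintype 𝒰₂] [DecidableEq 𝒰₂] [Nonempty 𝒰₂]
    (q : ℕ) [NeZero q] {n : ℕ} (hn : 1 ≤ n)
    (μ : Ω → ℝ) (hμ0 : ∀ ω, 0 ≤ μ ω) (hμ1 : ∑ ω, μ ω = 1)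
    (U₁ : Ω → Fin n → 𝒰₁) (U₂ : Ω → Fin n → 𝒰₂)
    (V X₁ X₂ Y : Ω → Fin n → ZMod q)
    (hIndep : ∀ (v : Fin n → ZMod q) (u : (Fin n → 𝒰₁) × (Fin n → 𝒰₂)),
      pmass μ (fun ω => (V ω, (U₁ ω, U₂ ω))) (v, u) =
        pmass μ V v * pmass μ (fun ω => (U₁ ω, U₂ ω)) u)
    (hEnc1 : ∀ i : Fin n, ∃ g : (Fin n → 𝒰₁) → (Fin (i : ℕ) → ZMod q) → ZMod q,
      ∀ ω, X₁ ω i = g (U₁ ω) (fun j => Y ω (Fin.castLE i.isLt.le j)))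
    (hEnc2 : ∀ i : Fin n, ∃ g : (Fin n → 𝒰₂) → (Fin (i : ℕ) → ZMod q) → ZMod q,
      ∀ ω, X₂ ω i = g (U₂ ω) (fun j => Y ω (Fin.castLE i.isLt.le j)))
    (hAdd : ∀ ω (i : Fin n), Y ω i = X₁ ω i + X₂ ω i + V ω i)
    (ψ : (Fin n → ZMod q) → (Fin n → 𝒰₁) × (Fin n → 𝒰₂))
    (Pe : ℝ)
    (hPe : Pe = ∑ ω, if ψ (Y ω) ≠ (U₁ ω, U₂ ω) then μ ω else 0) :
    entropy μ (fun ω => (U₁ ω, U₂ ω)) ≤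
      n * Real.log q - entropy μ V + Real.log 2 +
        Pe * Real.log ((Fintype.card 𝒰₁ : ℝ) ^ n * (Fintype.card 𝒰₂ : ℝ) ^ n) := by
  classical
  choose g₁ hg₁ using hEnc1
  choose g₂ hg₂ using hEnc2
  set Up : Ω → (Fin n → 𝒰₁) × (Fin n → 𝒰₂) := fun ω => (U₁ ω, U₂ ω) with hUp
  have hPe' : Pe = ∑ ω, if ψ (Y ω) ≠ Up ω then μ ω else 0 := hPe.trans rfl
  -- the decoding map recovering the noise from (output, sources)
  set G : (Fin n → ZMod q) × ((Fin n → 𝒰₁) × (Fin n → 𝒰₂)) →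
      (Fin n → ZMod q) × ((Fin n → 𝒰₁) × (Fin n → 𝒰₂)) := fun yu =>
    (fun i => yu.1 i - g₁ i yu.2.1 (fun j => yu.1 (Fin.castLE i.isLt.le j))
        - g₂ i yu.2.2 (fun j => yu.1 (Fin.castLE i.isLt.le j)), yu.2) with hG
  have hGinj : Function.Injective G := by
    rintro ⟨y, u₁, u₂⟩ ⟨y', u₁', u₂'⟩ h
    rw [hG] at h
    simp only [Prod.mk.injEq] at h
    obtain ⟨h1, h2, h3⟩ := h
    subst h2; subst h3
    have hy : ∀ m : ℕ, ∀ i : Fin n, (i : ℕ) = m → y i = y' i := by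
      intro m
      induction m using Nat.strong_induction_on with
      | _ m ih =>
        intro i him
        have hpast : (fun j => y (Fin.castLE i.isLt.le j))
            = (fun j => y' (Fin.castLE i.isLt.le j)) := by
          funext j
          exact ih j.val (him ▸ j.isLt) (Fin.castLE i.isLt.le j) rfl
        have := congrFun h1 i
        simp only [hpast] at this
        exact sub_left_injective (sub_left_injective this)
    have : y = y' := funext fun i => hy i.val i rfl
    rw [this]
  have hGpt : ∀ ω, G (Y ω, Up ω) = (V ω, Up ω) := by
    intro ω
    rw [hG, hUp]
    refine Prod.ext ?_ rfl
    funext i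
    simp only
    rw [← hg₁ i ω, ← hg₂ i ω, hAdd ω i]
    ring
  -- error-pattern variable
  set W : Ω → Option ((Fin n → 𝒰₁) × (Fin n → 𝒰₂)) :=
    fun ω => if ψ (Y ω) = Up ω then none else some (Up ω) with hW
  have step1 : entropy μ (fun ω => (V ω, Up ω)) = entropy μ V + entropy μ Up :=
    entropy_pair_of_indep μ hμ1 V Up fun v u => hIndep v u
  have step2 : entropy μ (fun ω => (V ω, Up ω)) = entropy μ (fun ω => (Y ω, Up ω)) := by
    have hfun : (fun ω => (V ω, Up ω)) = fun ω => G (Y ω, Up ω) :=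
      funext fun ω => (hGpt ω).symm
    rw [hfun]
    exact entropy_comp_inj μ (fun ω => (Y ω, Up ω)) G hGinj
  have step3 : entropy μ (fun ω => (Y ω, Up ω)) = entropy μ (fun ω => (Y ω, W ω)) := by
    set f : (Fin n → ZMod q) × ((Fin n → 𝒰₁) × (Fin n → 𝒰₂)) →
        (Fin n → ZMod q) × Option ((Fin n → 𝒰₁) × (Fin n → 𝒰₂)) := fun yu =>
      (yu.1, if ψ yu.1 = yu.2 then none else some yu.2) with hf
    have hfinj : Function.Injective f := by
      rintro ⟨y, u⟩ ⟨y', u'⟩ h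
      rw [hf] at h
      simp only [Prod.mk.injEq] at h
      obtain ⟨hy, hw⟩ := h
      subst hy
      refine Prod.ext rfl ?_
      show u = u'
      by_cases h1 : ψ y = u <;> by_cases h2 : ψ y = u'
      · exact h1.symm.trans h2
      · rw [if_pos h1, if_neg h2] at hw
        exact absurd hw (by simp)
      · rw [if_neg h1, if_pos h2] at hw
        exact absurd hw (by simp)
      · rw [if_neg h1, if_neg h2] at hw
        exact Option.some_injective _ hw
    have hfun : (fun ω => (Y ω, W ω)) = fun ω => f (Y ω, Up ω) := by
      funext ω
      rw [hf, hW]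
    rw [hfun]
    exact (entropy_comp_inj μ (fun ω => (Y ω, Up ω)) f hfinj).symm
  have step4 : entropy μ (fun ω => (Y ω, W ω)) ≤ entropy μ Y + entropy μ W :=
    entropy_pair_le μ hμ0 hμ1 Y W
  -- output entropy bound
  have step5 : entropy μ Y ≤ (n : ℝ) * Real.log q := by
    have h := my_maxent (pmass μ Y) (pmass_nonneg μ hμ0 Y) (sum_pmass μ Y hμ1)
    have hcard : Fintype.card (Fin n → ZMod q) = q ^ n := by
      rw [Fintype.card_fun, ZMod.card, Fintype.card_fin]
    rw [hcard] at h
    have hE : entropy μ Y = ∑ a, Real.negMulLog (pmass μ Y a) := rfl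
    rw [hE]
    refine h.trans (le_of_eq ?_)
    push_cast
    rw [Real.log_pow]
  -- Fano-type bound on W
  have hWnone : pmass μ W none + Pe = 1 := by
    rw [hPe', ← hμ1]
    unfold pmass
    rw [← Finset.sum_add_distrib]
    refine Finset.sum_congr rfl fun ω _ => ?_
    by_cases h : ψ (Y ω) = Up ω <;> simp [hW, h]
  have hsome : ∑ u : (Fin n → 𝒰₁) × (Fin n → 𝒰₂), pmass μ W (some u) = Pe := by
    have h := sum_pmass μ W hμ1
    rw [Fintype.sum_option] at h
    linarith
  have hPe0 : 0 ≤ Pe := by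
    rw [← hsome]
    exact Finset.sum_nonneg fun u _ => pmass_nonneg μ hμ0 W (some u)
  have hgroup := my_grouping (fun u : (Fin n → 𝒰₁) × (Fin n → 𝒰₂) => pmass μ W (some u))
    (fun u => pmass_nonneg μ hμ0 W (some u))
  rw [hsome] at hgroup
  have hbin := my_maxent (fun b : Bool => if b then Pe else pmass μ W none)
    (fun b => by cases b <;> simp [hPe0, pmass_nonneg μ hμ0 W none])
    (by simp only [Fintype.sum_bool, if_true, Bool.false_eq_true, if_false]; linarith)
  simp only [Fintype.sum_bool, if_true, Bool.false_eq_true, if_false, Fintype.card_bool] at hbin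
  have hbin' : Real.negMulLog Pe + Real.negMulLog (pmass μ W none) ≤ Real.log 2 := by
    refine hbin.trans (le_of_eq ?_)
    norm_num
  have hcardβ : ((Fintype.card ((Fin n → 𝒰₁) × (Fin n → 𝒰₂)) : ℕ) : ℝ)
      = (Fintype.card 𝒰₁ : ℝ) ^ n * (Fintype.card 𝒰₂ : ℝ) ^ n := by
    rw [Fintype.card_prod, Fintype.card_fun, Fintype.card_fun, Fintype.card_fin]
    push_cast
    ring
  have step6 : entropy μ W ≤ Real.log 2
      + Pe * Real.log ((Fintype.card 𝒰₁ : ℝ) ^ n * (Fintype.card 𝒰₂ : ℝ) ^ n) := by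
    have hE : entropy μ W = Real.negMulLog (pmass μ W none)
        + ∑ u : (Fin n → 𝒰₁) × (Fin n → 𝒰₂), Real.negMulLog (pmass μ W (some u)) := by
      unfold entropy
      rw [Fintype.sum_option]
    rw [hE, ← hcardβ]
    linarith
  linarith
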